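/- Let O_x be a space operator with Fourier symbol F satisfying Re(F(γ)) < 0 for all γ ∈ ℝ^d, and suppose u_ν solves the fractional Cauchy problem ∂^ν u/∂t^ν = O_x u with u(0,·) = f₀ (Fourier-transformable) and vanishing higher initial time-derivatives, so that its Fourier–Laplace transform is LFu_ν(μ,γ) = μ^{ν-1} Ff₀(γ)/(μ^ν - F(γ)). If u₀ = lim_{ν↓0} u_ν exists pointwise and LF u₀ = lim_{ν↓0} LF u_ν, then Fu₀(t,γ) = Ff₀(γ)/(1 - F(γ)) for all t ≥ 0; i.e., u₀ is independent of t and solves u₀(x) - f₀(x) = O_x u₀(x). -/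

import Mathlib

open MeasureTheory Set Filter Topology
open scoped Interval

lemma eq_zero_of_moments (K : ℝ → ℝ) (hK : ContinuousOn K (Icc 0 1))
    (hm : ∀ n : ℕ, ∫ s in Ioo (0:ℝ) 1, s ^ n * K s = 0) :
    ∀ s ∈ Icc (0:ℝ) 1, K s = 0 := by
  have hKi : IntegrableOn K (Icc 0 1) := hK.integrableOn_compact isCompact_Icc
  have hKi' : IntegrableOn K (Ioo 0 1) := hKi.mono_set Ioo_subset_Icc_self
  have hKK : IntegrableOn (fun s => K s * K s) (Ioo 0 1) :=
    ((hK.mul hK).integrableOn_compact isCompact_Icc).mono_set Ioo_subset_Icc_self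
  have hcontmul : ∀ g : ℝ → ℝ, Continuous g → IntegrableOn (fun s => g s * K s) (Ioo 0 1) := by
    intro g hg
    exact ((hg.continuousOn.mul hK).integrableOn_compact isCompact_Icc).mono_set
      Ioo_subset_Icc_self
  have hpoly : ∀ p : Polynomial ℝ, ∫ s in Ioo (0:ℝ) 1, p.eval s * K s = 0 := by
    intro p
    induction p using Polynomial.induction_on' with
    | add p q hp hq =>
        simp only [Polynomial.eval_add, add_mul]
        rw [integral_add (hcontmul _ p.continuous) (hcontmul _ q.continuous), hp, hq, add_zero]
    | monomial n a =>
        simp only [Polynomial.eval_monomial]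
        simp_rw [mul_assoc]
        rw [integral_const_mul, hm n, mul_zero]
  -- Stone–Weierstrass
  set KC : C(Icc (0:ℝ) 1, ℝ) := ⟨(Icc (0:ℝ) 1).restrict K, hK.restrict⟩ with hKCdef
  have hmem : KC ∈ (polynomialFunctions (Icc (0:ℝ) 1)).topologicalClosure := by
    rw [polynomialFunctions_closure_eq_top 0 1]; trivial
  have hclos : KC ∈ closure (polynomialFunctions (Icc (0:ℝ) 1) : Set C(Icc (0:ℝ) 1, ℝ)) := hmem
  have key : ∀ ε : ℝ, 0 < ε →
      |∫ s in Ioo (0:ℝ) 1, K s * K s| ≤ ε * ∫ s in Ioo (0:ℝ) 1, |K s| := by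
    intro ε hε
    obtain ⟨b, hbmem, hdist⟩ := Metric.mem_closure_iff.mp hclos ε hε
    rw [polynomialFunctions_coe] at hbmem
    obtain ⟨p, hp⟩ := hbmem
    have hbound : ∀ s ∈ Ioo (0:ℝ) 1, |K s - p.eval s| ≤ ε := by
      intro s hs
      have hs' : s ∈ Icc (0:ℝ) 1 := Ioo_subset_Icc_self hs
      have h1 : dist (KC ⟨s, hs'⟩) (b ⟨s, hs'⟩) ≤ dist KC b :=
        ContinuousMap.dist_apply_le_dist _
      have h2 : b ⟨s, hs'⟩ = p.eval s := by
        rw [← hp]; rfl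
      have h3 : KC ⟨s, hs'⟩ = K s := rfl
      rw [h2, h3, Real.dist_eq] at h1
      exact h1.trans hdist.le
    have heq : (∫ s in Ioo (0:ℝ) 1, K s * K s)
        = ∫ s in Ioo (0:ℝ) 1, (K s - p.eval s) * K s := by
      simp_rw [sub_mul]
      rw [integral_sub hKK (hcontmul _ p.continuous), hpoly p, sub_zero]
    rw [heq]
    have habs := norm_integral_le_integral_norm
      (μ := volume.restrict (Ioo (0:ℝ) 1)) (fun s => (K s - p.eval s) * K s)
    simp only [Real.norm_eq_abs] at habs
    refine habs.trans ?_
    rw [← integral_const_mul]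
    refine setIntegral_mono_on ?_ ?_ measurableSet_Ioo ?_
    · exact (((hK.sub p.continuous.continuousOn).mul hK).integrableOn_compact
        isCompact_Icc).mono_set Ioo_subset_Icc_self |>.abs
    · exact (hKi'.abs.const_mul ε)
    · intro s hs
      rw [abs_mul]
      exact mul_le_mul_of_nonneg_right (hbound s hs) (abs_nonneg _)
  -- conclude the L² norm vanishes
  have hI : ∫ s in Ioo (0:ℝ) 1, K s * K s = 0 := by
    have h0 : |∫ s in Ioo (0:ℝ) 1, K s * K s| ≤ 0 := by
      set C := ∫ s in Ioo (0:ℝ) 1, |K s| with hC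
      have hCnn : 0 ≤ C := integral_nonneg fun s => abs_nonneg _
      refine le_of_forall_pos_le_add (fun δ hδ => ?_)
      have h1 := key (δ / (C + 1)) (by positivity)
      calc |∫ s in Ioo (0:ℝ) 1, K s * K s| ≤ δ / (C + 1) * C := h1
        _ ≤ δ := by
            rw [div_mul_eq_mul_div, div_le_iff₀ (by positivity)]
            nlinarith
        _ = 0 + δ := (zero_add δ).symm
    exact abs_eq_zero.mp (le_antisymm h0 (abs_nonneg _))
  have hae : (fun s => K s * K s) =ᵐ[volume.restrict (Ioo (0:ℝ) 1)] 0 :=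
    (MeasureTheory.setIntegral_eq_zero_iff_of_nonneg_ae
      (Eventually.of_forall fun s => mul_self_nonneg _) hKK).mp hI
  have heqon : EqOn (fun s => K s * K s) 0 (Ioo 0 1) :=
    Measure.eqOn_open_of_ae_eq hae isOpen_Ioo
      ((hK.mono Ioo_subset_Icc_self).mul (hK.mono Ioo_subset_Icc_self)) continuousOn_const
  have hKO : EqOn K 0 (Ioo 0 1) := by
    intro s hs
    have := heqon hs
    simp only [Pi.zero_apply] at this ⊢
    exact mul_self_eq_zero.mp this
  exact fun s hs => hKO.of_subset_closure hK continuousOn_const Ioo_subset_Icc_self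
    (by rw [closure_Ioo (by norm_num : (0:ℝ) ≠ 1)]) hs


lemma laplace_zero_real (h : ℝ → ℝ) (hc : Continuous h)
    (hint : ∀ μ : ℝ, 0 < μ → IntegrableOn (fun t => Real.exp (-μ * t) * h t) (Ioi 0))
    (hzero : ∀ μ : ℝ, 0 < μ → ∫ t in Ioi (0:ℝ), Real.exp (-μ * t) * h t = 0) :
    ∀ t : ℝ, 0 ≤ t → h t = 0 := by
  set k : ℝ → ℝ := fun s => h (-Real.log s) with hkdef
  have hderiv : ∀ x ∈ Ioo (0:ℝ) 1,
      HasDerivWithinAt (fun s => -Real.log s) (-x⁻¹) (Ioo 0 1) x :=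
    fun x hx => ((Real.hasDerivAt_log (ne_of_gt hx.1)).neg).hasDerivWithinAt
  have hinj : InjOn (fun s => -Real.log s) (Ioo 0 1) := fun a ha b hb hab =>
    Real.log_injOn_pos (mem_Ioi.mpr ha.1) (mem_Ioi.mpr hb.1) (neg_inj.mp hab)
  have himg : (fun s => -Real.log s) '' Ioo 0 1 = Ioi 0 := by
    ext x
    constructor
    · rintro ⟨s, hs, rfl⟩
      exact neg_pos.mpr (Real.log_neg hs.1 hs.2)
    · intro hx
      exact ⟨Real.exp (-x), ⟨Real.exp_pos _,
        Real.exp_lt_one_iff.mpr (neg_neg_iff_pos.mpr hx)⟩, by simp [Real.log_exp]⟩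
  -- pointwise simplification of the transformed integrand
  have hptwise : ∀ n : ℕ, ∀ s ∈ Ioo (0:ℝ) 1,
      |(-s⁻¹)| • (Real.exp (-((n:ℝ)+1) * (-Real.log s)) * k s) = s ^ n * k s := by
    intro n s hs
    have hs0 : (0:ℝ) < s := hs.1
    have h1 : |(-s⁻¹)| = s⁻¹ := by
      rw [abs_neg, abs_inv, abs_of_pos hs0]
    have h2 : Real.exp (-((n:ℝ)+1) * (-Real.log s)) = s ^ (n+1) := by
      rw [neg_mul_neg]
      have : ((n:ℝ)+1) * Real.log s = ((n+1 : ℕ):ℝ) * Real.log s := by push_cast; ring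
      rw [this, Real.exp_nat_mul, Real.exp_log hs0]
    rw [h1, h2, smul_eq_mul, pow_succ]
    field_simp
  -- transformed moments and integrability
  have htrans : ∀ n : ℕ,
      (∫ t in Ioi (0:ℝ), Real.exp (-((n:ℝ)+1) * t) * h t) = ∫ s in Ioo (0:ℝ) 1, s ^ n * k s := by
    intro n
    rw [← himg, integral_image_eq_integral_abs_deriv_smul measurableSet_Ioo hderiv hinj]
    exact setIntegral_congr_fun measurableSet_Ioo (hptwise n)
  have hmom : ∀ n : ℕ, ∫ s in Ioo (0:ℝ) 1, s ^ n * k s = 0 := by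
    intro n
    rw [← htrans n]
    exact hzero _ (by positivity)
  have hki : ∀ n : ℕ, IntegrableOn (fun s => s ^ n * k s) (Ioo 0 1) := by
    intro n
    have h1 : IntegrableOn (fun t => Real.exp (-((n:ℝ)+1) * t) * h t)
        ((fun s => -Real.log s) '' Ioo 0 1) := by
      rw [himg]; exact hint _ (by positivity)
    rw [integrableOn_image_iff_integrableOn_abs_deriv_smul measurableSet_Ioo hderiv hinj] at h1
    exact h1.congr_fun (hptwise n) measurableSet_Ioo
  have hk0 : IntegrableOn k (Ioo 0 1) := by
    have := hki 0
    simpa using this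
  have hkmeas : Measurable k := hc.measurable.comp Real.measurable_log.neg
  have hkcont : ∀ s : ℝ, 0 < s → ContinuousAt k s := fun s hs =>
    hc.continuousAt.comp ((Real.continuousAt_log (ne_of_gt hs)).neg)
  have hkIcc : IntegrableOn k (Icc 0 1) := by
    rw [integrableOn_Icc_iff_integrableOn_Ioo]; exact hk0
  set K : ℝ → ℝ := fun x => ∫ s in (0:ℝ)..x, k s with hKdef
  have hKcont : ContinuousOn K (Icc 0 1) := by
    have h1 : IntegrableOn k (uIcc (0:ℝ) 1) := by rwa [uIcc_of_le zero_le_one]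
    have := intervalIntegral.continuousOn_primitive_interval h1
    rwa [uIcc_of_le zero_le_one] at this
  have hKderiv : ∀ s : ℝ, s ∈ Ioc (0:ℝ) 1 → HasDerivAt K (k s) s := by
    intro s hs
    refine intervalIntegral.integral_hasDerivAt_right ?_
      ⟨univ, univ_mem, hkmeas.aestronglyMeasurable.restrict⟩ (hkcont s hs.1)
    rw [intervalIntegrable_iff_integrableOn_Ioc_of_le hs.1.le]
    exact hkIcc.mono_set (fun x hx => ⟨hx.1.le, hx.2.trans hs.2⟩)
  have hK1 : K 1 = 0 := by
    have h0 := hmom 0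
    simp only [pow_zero, one_mul] at h0
    show (∫ s in (0:ℝ)..1, k s) = 0
    rw [intervalIntegral.integral_of_le zero_le_one, integral_Ioc_eq_integral_Ioo]
    exact h0
  -- moments of K vanish (integration by parts + limit a → 0⁺)
  have hmomK : ∀ n : ℕ, ∫ s in Ioo (0:ℝ) 1, s ^ n * K s = 0 := by
    intro n
    have hvd : ∀ x : ℝ, HasDerivAt (fun y => y ^ (n+1) / ((n:ℝ)+1)) (x ^ n) x := by
      intro x
      have hd := (hasDerivAt_pow (n+1) x).div_const ((n:ℝ)+1)
      have he : (↑(n+1) * x ^ (n + 1 - 1)) / ((n:ℝ)+1) = x ^ n := by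
        push_cast; field_simp
      rwa [he] at hd
    have hKxn : IntegrableOn (fun x => K x * x ^ n) (Icc 0 1) :=
      (hKcont.mul (continuous_pow n).continuousOn).integrableOn_compact isCompact_Icc
    have hkv : IntegrableOn (fun x => k x * (x ^ (n+1) / ((n:ℝ)+1))) (Ioo 0 1) := by
      have h1 := (hki (n+1)).const_mul (((n:ℝ)+1)⁻¹)
      exact MeasureTheory.IntegrableOn.congr_fun h1 (fun s _ => by ring) measurableSet_Ioo
    have hkvIcc : IntegrableOn (fun x => k x * (x ^ (n+1) / ((n:ℝ)+1))) (Icc 0 1) := by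
      rw [integrableOn_Icc_iff_integrableOn_Ioo]; exact hkv
    have hIBP : ∀ a ∈ Ioo (0:ℝ) 1, (∫ x in a..1, K x * x ^ n)
        = K 1 * ((1:ℝ) ^ (n+1) / ((n:ℝ)+1)) - K a * (a ^ (n+1) / ((n:ℝ)+1))
          - ∫ x in a..1, k x * (x ^ (n+1) / ((n:ℝ)+1)) := by
      intro a ha
      have huIcc : Set.uIcc a (1:ℝ) = Icc a 1 := uIcc_of_le ha.2.le
      refine intervalIntegral.integral_mul_deriv_eq_deriv_mul (u := K) (u' := k)
        (v := fun x => x ^ (n+1) / ((n:ℝ)+1)) (v' := fun x => x ^ n) ?_ ?_ ?_ ?_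
      · intro x hx
        rw [huIcc] at hx
        exact hKderiv x ⟨lt_of_lt_of_le ha.1 hx.1, hx.2⟩
      · intro x _
        exact hvd x
      · rw [intervalIntegrable_iff_integrableOn_Ioc_of_le ha.2.le]
        exact hkIcc.mono_set (fun x hx => ⟨(ha.1.trans hx.1).le, hx.2⟩)
      · exact (continuous_pow n).intervalIntegrable a 1
    -- the filter of approach
    have hne : (𝓝[Ioo (0:ℝ) 1] (0:ℝ)).NeBot := by
      apply mem_closure_iff_nhdsWithin_neBot.mp
      rw [closure_Ioo (by norm_num : (0:ℝ) ≠ 1)]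
      exact ⟨le_refl 0, zero_le_one⟩
    have hmono : 𝓝[Ioo (0:ℝ) 1] (0:ℝ) ≤ 𝓝[Icc (0:ℝ) 1] (0:ℝ) :=
      nhdsWithin_mono _ Ioo_subset_Icc_self
    have h0Icc : (0:ℝ) ∈ Icc (0:ℝ) 1 := ⟨le_refl 0, zero_le_one⟩
    -- LHS tendsto
    have hprimK : ContinuousOn (fun a => ∫ x in a..1, K x * x ^ n) (Icc 0 1) := by
      have h1 : IntegrableOn (fun x => K x * x ^ n) (uIcc (0:ℝ) 1) := by
        rwa [uIcc_of_le zero_le_one]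
      have := intervalIntegral.continuousOn_primitive_interval_left h1
      rwa [uIcc_of_le zero_le_one] at this
    have hLHS : Tendsto (fun a => ∫ x in a..1, K x * x ^ n) (𝓝[Ioo (0:ℝ) 1] 0)
        (𝓝 (∫ x in (0:ℝ)..1, K x * x ^ n)) :=
      ((hprimK 0 h0Icc).tendsto).mono_left hmono
    -- RHS tendsto
    have hKa : Tendsto (fun a : ℝ => K a * (a ^ (n+1) / ((n:ℝ)+1))) (𝓝[Ioo (0:ℝ) 1] 0)
        (𝓝 0) := by
      have h1 : Tendsto K (𝓝[Ioo (0:ℝ) 1] 0) (𝓝 (K 0)) :=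
        ((hKcont 0 h0Icc).tendsto).mono_left hmono
      have h2 : Tendsto (fun a : ℝ => a ^ (n+1) / ((n:ℝ)+1)) (𝓝[Ioo (0:ℝ) 1] 0)
          (𝓝 ((0:ℝ) ^ (n+1) / ((n:ℝ)+1))) :=
        (((continuous_pow (n+1)).div_const ((n:ℝ)+1)).tendsto 0).mono_left nhdsWithin_le_nhds
      have := h1.mul h2
      simpa using this
    have hprimkv : ContinuousOn (fun a => ∫ x in a..1, k x * (x ^ (n+1) / ((n:ℝ)+1)))
        (Icc 0 1) := by
      have h1 : IntegrableOn (fun x => k x * (x ^ (n+1) / ((n:ℝ)+1))) (uIcc (0:ℝ) 1) := by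
        rwa [uIcc_of_le zero_le_one]
      have := intervalIntegral.continuousOn_primitive_interval_left h1
      rwa [uIcc_of_le zero_le_one] at this
    have hkv0 : (∫ x in (0:ℝ)..1, k x * (x ^ (n+1) / ((n:ℝ)+1))) = 0 := by
      rw [intervalIntegral.integral_of_le zero_le_one, integral_Ioc_eq_integral_Ioo]
      simp_rw [show ∀ s : ℝ, k s * (s ^ (n+1) / ((n:ℝ)+1))
        = ((n:ℝ)+1)⁻¹ * (s ^ (n+1) * k s) from fun s => by ring]
      rw [integral_const_mul, hmom (n+1), mul_zero]
    have hRHS : Tendsto (fun a => K 1 * ((1:ℝ) ^ (n+1) / ((n:ℝ)+1))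
        - K a * (a ^ (n+1) / ((n:ℝ)+1)) - ∫ x in a..1, k x * (x ^ (n+1) / ((n:ℝ)+1)))
        (𝓝[Ioo (0:ℝ) 1] 0) (𝓝 0) := by
      have h3 : Tendsto (fun a => ∫ x in a..1, k x * (x ^ (n+1) / ((n:ℝ)+1)))
          (𝓝[Ioo (0:ℝ) 1] 0) (𝓝 0) := by
        have := ((hprimkv 0 h0Icc).tendsto).mono_left hmono
        rwa [hkv0] at this
      have := ((tendsto_const_nhds (x := K 1 * ((1:ℝ) ^ (n+1) / ((n:ℝ)+1)))
        (f := 𝓝[Ioo (0:ℝ) 1] 0)).sub hKa).sub h3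
      simpa [hK1] using this
    have heq : (∫ x in (0:ℝ)..1, K x * x ^ n) = 0 := by
      refine tendsto_nhds_unique (hLHS.congr' ?_) hRHS
      filter_upwards [self_mem_nhdsWithin] with a ha
      exact hIBP a ha
    rw [intervalIntegral.integral_of_le zero_le_one, integral_Ioc_eq_integral_Ioo] at heq
    have hswap : (∫ s in Ioo (0:ℝ) 1, s ^ n * K s) = ∫ s in Ioo (0:ℝ) 1, K s * s ^ n :=
      setIntegral_congr_fun measurableSet_Ioo (fun s _ => by ring)
    rw [hswap]
    exact heq
  -- conclude K ≡ 0, then k ≡ 0 on (0,1), then h ≡ 0 on [0,∞)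
  have hKzero : ∀ s ∈ Icc (0:ℝ) 1, K s = 0 := eq_zero_of_moments K hKcont hmomK
  have hkzero : ∀ s ∈ Ioo (0:ℝ) 1, k s = 0 := by
    intro s hs
    have hev : K =ᶠ[𝓝 s] (fun _ => (0:ℝ)) := by
      filter_upwards [isOpen_Ioo.mem_nhds hs] with x hx
      exact hKzero x (Ioo_subset_Icc_self hx)
    have h1 : HasDerivAt K 0 s := (hasDerivAt_const s (0:ℝ)).congr_of_eventuallyEq hev
    have h2 : HasDerivAt K (k s) s := hKderiv s ⟨hs.1, hs.2.le⟩
    exact h2.unique h1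
  have hpos : ∀ t : ℝ, 0 < t → h t = 0 := by
    intro t ht
    have h1 : Real.exp (-t) ∈ Ioo (0:ℝ) 1 :=
      ⟨Real.exp_pos _, Real.exp_lt_one_iff.mpr (neg_neg_iff_pos.mpr ht)⟩
    have h2 := hkzero _ h1
    simpa [hkdef, Real.log_exp] using h2
  intro t ht
  rcases eq_or_lt_of_le ht with rfl | ht'
  · have h1 : Tendsto h (𝓝[>] (0:ℝ)) (𝓝 (h 0)) :=
      (hc.tendsto 0).mono_left nhdsWithin_le_nhds
    have h2 : Tendsto h (𝓝[>] (0:ℝ)) (𝓝 0) := by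
      refine tendsto_const_nhds.congr' ?_
      filter_upwards [self_mem_nhdsWithin] with x hx
      exact (hpos x hx).symm
    exact tendsto_nhds_unique h1 h2
  · exact hpos t ht'

lemma laplace_zero_complex (h : ℝ → ℂ) (hc : Continuous h)
    (hint : ∀ μ : ℝ, 0 < μ →
      IntegrableOn (fun t : ℝ => Complex.exp (-(μ:ℂ) * t) * h t) (Ioi 0))
    (hzero : ∀ μ : ℝ, 0 < μ → ∫ t in Ioi (0:ℝ), Complex.exp (-(μ:ℂ) * t) * h t = 0) :
    ∀ t : ℝ, 0 ≤ t → h t = 0 := by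
  have hexp : ∀ (μ t : ℝ), Complex.exp (-(μ:ℂ) * t) = ((Real.exp (-μ * t) : ℝ) : ℂ) := by
    intro μ t
    rw [Complex.ofReal_exp]
    norm_cast
  have hre : ∀ t : ℝ, 0 ≤ t → (h t).re = 0 := by
    refine laplace_zero_real _ (Complex.continuous_re.comp hc) ?_ ?_
    · intro μ hμ
      have h1 := (hint μ hμ).re
      have h2 : (fun t : ℝ => Real.exp (-μ * t) * (h t).re)
          = fun t : ℝ => (Complex.exp (-(μ:ℂ) * t) * h t).re := by
        funext t
        simp [Complex.mul_re, Complex.mul_im, ← Complex.ofReal_mul, ← Complex.ofReal_neg,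
          Complex.exp_ofReal_re, Complex.exp_ofReal_im]
      rw [h2]; exact h1
    · intro μ hμ
      have h1 := Complex.reCLM.integral_comp_comm (hint μ hμ)
      simp only [Complex.reCLM_apply] at h1
      have h2 : (fun t : ℝ => Real.exp (-μ * t) * (h t).re)
          = fun t : ℝ => (Complex.exp (-(μ:ℂ) * t) * h t).re := by
        funext t
        simp [Complex.mul_re, Complex.mul_im, ← Complex.ofReal_mul, ← Complex.ofReal_neg,
          Complex.exp_ofReal_re, Complex.exp_ofReal_im]
      rw [h2, h1, hzero μ hμ, Complex.zero_re]
  have him : ∀ t : ℝ, 0 ≤ t → (h t).im = 0 := by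
    refine laplace_zero_real _ (Complex.continuous_im.comp hc) ?_ ?_
    · intro μ hμ
      have h1 := (hint μ hμ).im
      have h2 : (fun t : ℝ => Real.exp (-μ * t) * (h t).im)
          = fun t : ℝ => (Complex.exp (-(μ:ℂ) * t) * h t).im := by
        funext t
        simp [Complex.mul_re, Complex.mul_im, ← Complex.ofReal_mul, ← Complex.ofReal_neg,
          Complex.exp_ofReal_re, Complex.exp_ofReal_im]
      rw [h2]; exact h1
    · intro μ hμ
      have h1 := Complex.imCLM.integral_comp_comm (hint μ hμ)
      simp only [Complex.imCLM_apply] at h1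
      have h2 : (fun t : ℝ => Real.exp (-μ * t) * (h t).im)
          = fun t : ℝ => (Complex.exp (-(μ:ℂ) * t) * h t).im := by
        funext t
        simp [Complex.mul_re, Complex.mul_im, ← Complex.ofReal_mul, ← Complex.ofReal_neg,
          Complex.exp_ofReal_re, Complex.exp_ofReal_im]
      rw [h2, h1, hzero μ hμ, Complex.zero_im]
  intro t ht
  exact Complex.ext (hre t ht) (him t ht)

theorem limit_fractional_order_zero
    (d : ℕ) (F : (Fin d → ℝ) → ℂ) (hF : ∀ γ, (F γ).re < 0)
    (f0hat : (Fin d → ℝ) → ℂ)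
    -- `Fu₀ t γ` is the Fourier transform (in x) of the pointwise limit `u₀ = lim_{ν↓0} u_ν`
    (Fu₀ : ℝ → (Fin d → ℝ) → ℂ)
    (hcont : ∀ γ, Continuous fun t => Fu₀ t γ)
    (hintFu₀ : ∀ μ : ℝ, 0 < μ → ∀ γ,
      IntegrableOn (fun t : ℝ => Complex.exp (-(μ : ℂ) * t) * Fu₀ t γ) (Ioi 0))
    -- the Laplace–Fourier transform of `u₀` is the limit, as `ν ↓ 0`, of the
    -- Laplace–Fourier transform `μ^{ν-1} Ff₀(γ)/(μ^ν - F(γ))` of the solution `u_ν`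
    (hlim : ∀ μ : ℝ, 0 < μ → ∀ γ,
      Tendsto (fun ν : ℝ =>
          (μ : ℂ) ^ ((ν : ℂ) - 1) * f0hat γ / ((μ : ℂ) ^ (ν : ℂ) - F γ))
        (nhdsWithin 0 (Ioi 0))
        (nhds (∫ t in Ioi (0:ℝ), Complex.exp (-(μ : ℂ) * t) * Fu₀ t γ))) :
    ∀ t : ℝ, 0 ≤ t → ∀ γ,
      Fu₀ t γ = f0hat γ / (1 - F γ) ∧
      Fu₀ t γ - f0hat γ = F γ * Fu₀ t γ := by
  intro t ht γ
  have hF1 : (1 : ℂ) - F γ ≠ 0 := by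
    intro hcontra
    have h0 : ((1 : ℂ) - F γ).re = 0 := by rw [hcontra]; simp
    rw [Complex.sub_re, Complex.one_re] at h0
    linarith [hF γ]
  set c : ℂ := f0hat γ / (1 - F γ) with hcdef
  -- value of the Laplace transform of `Fu₀ · γ`
  have hLT : ∀ μ : ℝ, 0 < μ →
      (∫ s in Ioi (0:ℝ), Complex.exp (-(μ:ℂ) * s) * Fu₀ s γ) = c * (μ:ℂ)⁻¹ := by
    intro μ hμ
    have hμ0 : (μ:ℂ) ≠ 0 := by
      simpa using ne_of_gt hμ
    have hca : ContinuousAt (fun ν : ℝ =>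
        (μ : ℂ) ^ ((ν : ℂ) - 1) * f0hat γ / ((μ : ℂ) ^ (ν : ℂ) - F γ)) 0 := by
      refine ContinuousAt.div ?_ ?_ ?_
      · exact (ContinuousAt.const_cpow
          ((Complex.continuous_ofReal.continuousAt).sub continuousAt_const)
          (Or.inl hμ0)).mul continuousAt_const
      · exact (ContinuousAt.const_cpow Complex.continuous_ofReal.continuousAt
          (Or.inl hμ0)).sub continuousAt_const
      · simpa using hF1
    have h1 : Tendsto (fun ν : ℝ =>
        (μ : ℂ) ^ ((ν : ℂ) - 1) * f0hat γ / ((μ : ℂ) ^ (ν : ℂ) - F γ))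
        (nhdsWithin 0 (Ioi 0))
        (𝓝 ((μ : ℂ) ^ (((0:ℝ) : ℂ) - 1) * f0hat γ / ((μ : ℂ) ^ (((0:ℝ)) : ℂ) - F γ))) :=
      hca.tendsto.mono_left nhdsWithin_le_nhds
    have h2 := tendsto_nhds_unique (hlim μ hμ γ) h1
    rw [h2]
    rw [Complex.ofReal_zero, Complex.cpow_zero, zero_sub, Complex.cpow_neg,
      Complex.cpow_one, hcdef]
    ring
  apply fun hh : Fu₀ t γ = c => ⟨hh, by rw [hh, hcdef]; field_simp; ring⟩
  -- it remains: Fu₀ t γ = c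
  have hexpint : ∀ μ : ℝ, 0 < μ →
      IntegrableOn (fun s : ℝ => Complex.exp (-(μ:ℂ) * s)) (Ioi 0) := by
    intro μ hμ
    refine Integrable.mono' ((exp_neg_integrableOn_Ioi 0 hμ)) ?_ ?_
    · exact (Complex.continuous_exp.comp
        ((continuous_const.mul Complex.continuous_ofReal))).aestronglyMeasurable.restrict
    · filter_upwards with s
      rw [Complex.norm_exp]
      simp [neg_mul]
  have hexpval : ∀ μ : ℝ, 0 < μ →
      (∫ s in Ioi (0:ℝ), Complex.exp (-(μ:ℂ) * s)) = (μ:ℂ)⁻¹ := by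
    intro μ hμ
    have h1 : (∫ s in Ioi (0:ℝ), Complex.exp (-(μ:ℂ) * s))
        = ∫ s in Ioi (0:ℝ), ((Real.exp (-μ * s) : ℝ) : ℂ) := by
      refine setIntegral_congr_fun measurableSet_Ioi (fun s _ => ?_)
      rw [Complex.ofReal_exp]; norm_cast
    have h2 : (∫ s in Ioi (0:ℝ), Real.exp (-μ * s)) = μ⁻¹ := by
      have h3 := integral_comp_mul_left_Ioi (fun x => Real.exp (-x)) 0 hμ
      simp only [mul_zero] at h3
      rw [integral_exp_neg_Ioi_zero] at h3
      simp only [neg_mul] at h3 ⊢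
      rw [h3, smul_eq_mul, mul_one]
    have h4 : IntegrableOn (fun s : ℝ => Real.exp (-μ * s)) (Ioi 0) := by
      have := exp_neg_integrableOn_Ioi 0 hμ
      simpa [neg_mul] using this
    have h5 := Complex.ofRealCLM.integral_comp_comm h4
    simp only [Complex.ofRealCLM_apply] at h5
    rw [h1, h5, h2]
    norm_cast
  have hzero : ∀ μ : ℝ, 0 < μ →
      ∫ s in Ioi (0:ℝ), Complex.exp (-(μ:ℂ) * s) * (Fu₀ s γ - c) = 0 := by
    intro μ hμ
    have h1 : (∫ s in Ioi (0:ℝ), Complex.exp (-(μ:ℂ) * s) * (Fu₀ s γ - c))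
        = (∫ s in Ioi (0:ℝ), Complex.exp (-(μ:ℂ) * s) * Fu₀ s γ)
          - ∫ s in Ioi (0:ℝ), Complex.exp (-(μ:ℂ) * s) * c := by
      simp_rw [mul_sub]
      exact integral_sub (hintFu₀ μ hμ γ) ((hexpint μ hμ).mul_const c)
    rw [h1, hLT μ hμ, integral_mul_const, hexpval μ hμ]
    ring
  have hintsub : ∀ μ : ℝ, 0 < μ →
      IntegrableOn (fun s : ℝ => Complex.exp (-(μ:ℂ) * s) * (Fu₀ s γ - c)) (Ioi 0) := by
    intro μ hμ
    have h1 : IntegrableOn (fun s : ℝ => Complex.exp (-(μ:ℂ) * s) * Fu₀ s γ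
        - Complex.exp (-(μ:ℂ) * s) * c) (Ioi 0) :=
      (hintFu₀ μ hμ γ).sub ((hexpint μ hμ).mul_const c)
    exact MeasureTheory.IntegrableOn.congr_fun h1 (fun s _ => by ring) measurableSet_Ioi
  have hfinal := laplace_zero_complex (fun s => Fu₀ s γ - c)
    ((hcont γ).sub continuous_const) hintsub hzero t ht
  linear_combination hfinal
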